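/- Fix m ≥ 1 and equip ℤ^m with the ℓ^∞ metric. Let p₁, p₂ : ℤ^m → ℤ^m be surjective (L, A)-quasi-isometries such that d(p₁(x), p₂(x)) ≤ A for all x ∈ ℤ^m, and suppose there are positive integers r₁, r₂ such that every fiber of p₁ has exactly r₁ elements and every fiber of p₂ has exactly r₂ elements. Then r₁ = r₂. -/

import Mathlib

open Filter Topology

lemma aux_preimage {α β : Type*} [DecidableEq α] (p : α → β) (r : ℕ) (hr : 0 < r)
    (hf : ∀ y, (p ⁻¹' {y}).ncard = r) (B : Finset β) :
    (p ⁻¹' ↑B).Finite ∧ (p ⁻¹' ↑B).ncard = r * B.card := by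
  have hfin : ∀ y, (p ⁻¹' {y}).Finite := by
    intro y
    by_contra h
    have := Set.Infinite.ncard h
    rw [hf y] at this
    omega
  classical
  set F : Finset α := B.biUnion (fun y => (hfin y).toFinset) with hF
  have hset : (↑F : Set α) = p ⁻¹' ↑B := by
    ext x
    simp [hF, Set.Finite.mem_toFinset]
  have hcard : F.card = r * B.card := by
    rw [hF, Finset.card_biUnion]
    · have : ∀ y ∈ B, ((hfin y).toFinset).card = r := by
        intro y _
        rw [← Set.ncard_eq_toFinset_card _ (hfin y), hf y]
      rw [Finset.sum_congr rfl this, Finset.sum_const, smul_eq_mul, mul_comm]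
    · intro y _ z _ hyz
      rw [Function.onFun, Finset.disjoint_left]
      intro a ha hb
      simp [Set.Finite.mem_toFinset] at ha hb
      exact hyz (ha ▸ hb ▸ rfl)
  refine ⟨?_, ?_⟩
  · rw [← hset]; exact F.finite_toSet
  · rw [← hset, Set.ncard_coe_finset, hcard]

lemma aux_limit (m c a b : ℕ)
    (h : ∀ R : ℕ, a * (2*R+1)^m ≤ b * (2*R+1+2*c)^m) : a ≤ b := by
  have key : ∀ R : ℕ, (a : ℝ) ≤ (b : ℝ) * ((2*R+1+2*c : ℝ)/(2*R+1))^m := by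
    intro R
    have hpos : (0:ℝ) < (2*(R:ℝ)+1) := by positivity
    have h' : (a:ℝ) * (2*R+1)^m ≤ (b:ℝ) * (2*R+1+2*c)^m := by exact_mod_cast h R
    rw [div_pow, ← mul_div_assoc, le_div_iff₀ (by positivity)]
    calc (a:ℝ) * (2*↑R+1)^m ≤ (b:ℝ) * (2*↑R+1+2*↑c)^m := h'
    _ = _ := by ring
  have h1 : Tendsto (fun R : ℕ => (2*R+1 : ℝ)) atTop atTop := by
    apply Filter.tendsto_atTop_add_const_right
    exact (tendsto_natCast_atTop_atTop).const_mul_atTop (by norm_num)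
  have h2 : Tendsto (fun R : ℕ => ((2*R+1+2*c : ℝ)/(2*R+1))) atTop (𝓝 1) := by
    have hz : Tendsto (fun R : ℕ => ((2*c : ℝ)/(2*R+1))) atTop (𝓝 0) :=
      Filter.Tendsto.div_atTop tendsto_const_nhds h1
    have : Tendsto (fun R : ℕ => 1 + ((2*c : ℝ)/(2*R+1))) atTop (𝓝 (1 + 0)) :=
      tendsto_const_nhds.add hz
    rw [add_zero] at this
    refine this.congr fun R => ?_
    have hpos : (0:ℝ) < (2*(R:ℝ)+1) := by positivity
    field_simp
  have h3 : Tendsto (fun R : ℕ => (b:ℝ) * ((2*R+1+2*c : ℝ)/(2*R+1))^m) atTop (𝓝 ((b:ℝ) * 1^m)) :=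
    tendsto_const_nhds.mul (h2.pow m)
  have : (a:ℝ) ≤ (b:ℝ) * 1^m := ge_of_tendsto' h3 key
  rw [one_pow, mul_one] at this
  exact_mod_cast this

lemma aux_main (m : ℕ) (p q : (Fin m → ℤ) → (Fin m → ℤ)) (c rp rq : ℕ)
    (hrp : 0 < rp) (hrq : 0 < rq)
    (hfp : ∀ y, (p ⁻¹' {y}).ncard = rp) (hfq : ∀ y, (q ⁻¹' {y}).ncard = rq)
    (hcl : ∀ x i, ((p x) i - (q x) i).natAbs ≤ c) : rp ≤ rq := by
  apply aux_limit m c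
  intro R
  classical
  set B : Finset (Fin m → ℤ) := Fintype.piFinset (fun _ : Fin m => Finset.Icc (-(R:ℤ)) R) with hB
  set B' : Finset (Fin m → ℤ) := Fintype.piFinset (fun _ : Fin m => Finset.Icc (-((R:ℤ)+c)) ((R:ℤ)+c)) with hB'
  have hcardB : B.card = (2*R+1)^m := by
    rw [hB, Fintype.card_piFinset]
    have : (Finset.Icc (-(R:ℤ)) R).card = 2*R+1 := by
      rw [Int.card_Icc]; omega
    rw [Finset.prod_const, this, Finset.card_univ, Fintype.card_fin]
  have hcardB' : B'.card = (2*R+1+2*c)^m := by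
    rw [hB', Fintype.card_piFinset]
    have : (Finset.Icc (-((R:ℤ)+c)) ((R:ℤ)+c)).card = 2*R+1+2*c := by
      rw [Int.card_Icc]; omega
    rw [Finset.prod_const, this, Finset.card_univ, Fintype.card_fin]
  have hsub : p ⁻¹' ↑B ⊆ q ⁻¹' ↑B' := by
    intro x hx
    simp only [hB, hB', Set.mem_preimage, Finset.mem_coe, Fintype.mem_piFinset,
      Finset.mem_Icc] at hx ⊢
    intro i
    have h1 := hx i
    have h2 := hcl x i
    omega
  obtain ⟨hfinB', heq'⟩ := aux_preimage q rq hrq hfq B'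
  obtain ⟨_, heq⟩ := aux_preimage p rp hrp hfp B
  calc rp * (2*R+1)^m = (p ⁻¹' ↑B).ncard := by rw [heq, hcardB]
    _ ≤ (q ⁻¹' ↑B').ncard := Set.ncard_le_ncard hsub hfinB'
    _ = rq * (2*R+1+2*c)^m := by rw [heq', hcardB']



/-- The ℓ^∞ distance on `ℤ^m`. -/
def dinf {m : ℕ} (x y : Fin m → ℤ) : ℕ :=
  Finset.univ.sup fun i => (x i - y i).natAbs

/-- if `p₁, p₂ : ℤ^m → ℤ^m` are surjective `(L, A)`-quasi-isometries at
distance at most `A` from each other, whose fibers all have exactly `r₁` (resp. `r₂`)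
elements, then `r₁ = r₂`. -/
theorem stmt_12 (m : ℕ) (hm : 1 ≤ m) (L A : ℝ) (hL : 1 ≤ L) (hA : 0 ≤ A)
    (p₁ p₂ : (Fin m → ℤ) → (Fin m → ℤ))
    (hs₁ : Function.Surjective p₁) (hs₂ : Function.Surjective p₂)
    (hq₁ : ∀ x y : Fin m → ℤ,
      (1 / L) * (dinf x y : ℝ) - A ≤ (dinf (p₁ x) (p₁ y) : ℝ) ∧
      (dinf (p₁ x) (p₁ y) : ℝ) ≤ L * (dinf x y : ℝ) + A)
    (hq₂ : ∀ x y : Fin m → ℤ,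
      (1 / L) * (dinf x y : ℝ) - A ≤ (dinf (p₂ x) (p₂ y) : ℝ) ∧
      (dinf (p₂ x) (p₂ y) : ℝ) ≤ L * (dinf x y : ℝ) + A)
    (hclose : ∀ x : Fin m → ℤ, (dinf (p₁ x) (p₂ x) : ℝ) ≤ A)
    (r₁ r₂ : ℕ) (hr₁ : 0 < r₁) (hr₂ : 0 < r₂)
    (hf₁ : ∀ y : Fin m → ℤ, (p₁ ⁻¹' {y}).ncard = r₁)
    (hf₂ : ∀ y : Fin m → ℤ, (p₂ ⁻¹' {y}).ncard = r₂) :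
    r₁ = r₂ := by
  set c := ⌈A⌉₊ with hc
  have hd : ∀ x : Fin m → ℤ, dinf (p₁ x) (p₂ x) ≤ c := by
    intro x
    have h1 : (dinf (p₁ x) (p₂ x) : ℝ) ≤ (c : ℝ) := (hclose x).trans (Nat.le_ceil A)
    exact_mod_cast h1
  have h12 : ∀ (x : Fin m → ℤ) (i : Fin m), ((p₁ x) i - (p₂ x) i).natAbs ≤ c := by
    intro x i
    have h := hd x
    unfold dinf at h
    exact le_trans (Finset.le_sup (f := fun i => ((p₁ x) i - (p₂ x) i).natAbs) (Finset.mem_univ i)) h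
  have h21 : ∀ (x : Fin m → ℤ) (i : Fin m), ((p₂ x) i - (p₁ x) i).natAbs ≤ c := by
    intro x i
    have := h12 x i
    omega
  exact le_antisymm (aux_main m p₁ p₂ c r₁ r₂ hr₁ hr₂ hf₁ hf₂ h12)
    (aux_main m p₂ p₁ c r₂ r₁ hr₂ hr₁ hf₂ hf₁ h21)
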